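/- Let n ≥ 2, 1 ≤ r ≤ n, let ε ∈ {+, −}, and let p, t, a_1, …, a_6 be nonzero complex numbers with |p| < 1, with parameters generic so that all theta denominators in the fundamental invariants are nonzero. Fix w, z_3, …, z_n in ℂ* generic (so that all theta denominators other than θ(z_1 z_2^{−1}; p) and θ(z_2 z_1^{−1}; p) are nonzero at the relevant points). Then the function z_1 ↦ θ(z_1/w; p) · [F_1^ε(z_1, w, z_3, …, z_n) · E_{r−1}^{(n−1)}(a_1, a_2; w, z_3, …, z_n) + F_2^ε(z_1, w, z_3, …, z_n) · E_{r−1}^{(n−1)}(a_1, a_2; z_1, z_3, …, z_n)] tends to 0 as z_1 → w. -/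

import Mathlib

open Finset

/-- The theta function `θ(z;p) = ∏_{i≥0} (1 - p^i z)(1 - p^{i+1}/z)`. -/
noncomputable def theta (p z : ℂ) : ℂ :=
  ∏' i : ℕ, ((1 - p ^ i * z) * (1 - p ^ (i + 1) * z⁻¹))

/-- The theta shifted factorial `θ(z;p;q)_k = ∏_{j=0}^{k-1} θ(q^j z;p)`. -/
noncomputable def thetaPoch (p q z : ℂ) (k : ℕ) : ℂ :=
  ∏ j ∈ Finset.range k, theta p (q ^ j * z)

/-- `θ(x u^{±1};p) = θ(xu;p) θ(x/u;p)`. -/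
noncomputable def thetaPm (p x u : ℂ) : ℂ :=
  theta p (x * u) * theta p (x * u⁻¹)

/-- The fundamental `BC_n` invariant `E_r(a₁,a₂;z)`, as a sum over the subsets
`S = {i_1 < … < i_r}` of `{0,…,n-1}` (0-based indexing); for `i ∈ S`,
`(S.filter (· < i)).card` is the (0-based) rank of `i` in `S`. -/
noncomputable def Efun (p t a₁ a₂ : ℂ) {n : ℕ} (r : ℕ) (z : Fin n → ℂ) : ℂ :=
  ∑ S ∈ Finset.powersetCard r (Finset.univ : Finset (Fin n)),
    (∏ i ∈ S,
        thetaPm p (a₂ * t ^ ((i : ℕ) - (S.filter (fun j => j < i)).card)) (z i) /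
          thetaPm p (a₂ * t ^ ((i : ℕ) - (S.filter (fun j => j < i)).card))
            (a₁ * t ^ (S.filter (fun j => j < i)).card)) *
    (∏ i ∈ Sᶜ,
        thetaPm p (a₁ * t ^ ((i : ℕ) - (Sᶜ.filter (fun j => j < i)).card)) (z i) /
          thetaPm p (a₁ * t ^ ((i : ℕ) - (Sᶜ.filter (fun j => j < i)).card))
            (a₂ * t ^ (Sᶜ.filter (fun j => j < i)).card))

/-- Genericity: all theta denominators appearing in the fundamental invariants are nonzero. -/
def eDenomsNZ (p t a₁ a₂ : ℂ) (n : ℕ) : Prop :=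
  ∀ k l : ℕ, k < n → l < n →
    thetaPm p (a₂ * t ^ k) (a₁ * t ^ l) ≠ 0 ∧ thetaPm p (a₁ * t ^ k) (a₂ * t ^ l) ≠ 0

/-- The reference point `ζ^{(s)} = (a₁, a₁t, …, a₁ t^{s-1}, a₂, a₂ t, …, a₂ t^{n-s-1})`. -/
noncomputable def zetaPt (a₁ a₂ t : ℂ) (n s : ℕ) : Fin n → ℂ :=
  fun i => if (i : ℕ) < s then a₁ * t ^ (i : ℕ) else a₂ * t ^ ((i : ℕ) - s)

/-- `F_i^+(z)`. -/
noncomputable def Fplus (p t : ℂ) (a : Fin 6 → ℂ) {n : ℕ} (i : Fin n) (z : Fin n → ℂ) : ℂ :=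
  ((∏ m : Fin 6, theta p (a m * z i)) / ((z i) ^ 2 * theta p ((z i) ^ 2))) *
    ∏ j ∈ Finset.univ.erase i, thetaPm p (t * z i) (z j) / thetaPm p (z i) (z j)

/-- `F_i^-(z) = F_i^+(z_1, …, z_i⁻¹, …, z_n)`. -/
noncomputable def Fminus (p t : ℂ) (a : Fin 6 → ℂ) {n : ℕ} (i : Fin n) (z : Fin n → ℂ) : ℂ :=
  Fplus p t a i (Function.update z i (z i)⁻¹)

/-- None of the theta denominators of `F_i^+` vanishes at `z`. -/
def FplusDenomNZ (p : ℂ) {n : ℕ} (i : Fin n) (z : Fin n → ℂ) : Prop :=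
  theta p ((z i) ^ 2) ≠ 0 ∧ ∀ j, j ≠ i → thetaPm p (z i) (z j) ≠ 0

/-- None of the theta denominators of `F_i^-` vanishes at `z`. -/
def FminusDenomNZ (p : ℂ) {n : ℕ} (i : Fin n) (z : Fin n → ℂ) : Prop :=
  FplusDenomNZ p i (Function.update z i (z i)⁻¹)

/-- `h_r(z) = Σ_i (F_i^-(z) + F_i^+(z)) E_{r-1}^{(n-1)}(z_1,…,ẑ_i,…,z_n)`, in `n+1` variables. -/
noncomputable def hFun (p t : ℂ) (a : Fin 6 → ℂ) (n r : ℕ) (z : Fin (n + 1) → ℂ) : ℂ :=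
  ∑ i : Fin (n + 1),
    (Fminus p t a i z + Fplus p t a i z) *
      Efun p t (a 0) (a 1) (r - 1) (fun j : Fin n => z (i.succAbove j))

/-- The base point `ξ = (a₁, a₁ t, …, a₁ t^{n-1})`. -/
noncomputable def xiPt (a₁ t : ℂ) (n : ℕ) : Fin n → ℂ := fun i => a₁ * t ^ (i : ℕ)

/-- The weight `W(ν) = Φ(q^ν ξ)/Φ(ξ)` of the truncated Jackson integral. -/
noncomputable def weight (p q t : ℂ) (a : Fin 6 → ℂ) (n : ℕ) (ν : Fin n → ℕ) : ℂ :=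
  (∏ i : Fin n,
      (q ^ 2 * (a 0 * a 1 * a 2 * a 3 * a 4 * a 5 * t ^ (2 * n - 2))⁻¹ *
            t ^ (2 * (n - 1 - (i : ℕ)))) ^ ν i *
        theta p (q ^ (2 * ν i) * xiPt (a 0) t n i ^ 2) / theta p (xiPt (a 0) t n i ^ 2)) *
  (∏ j : Fin n, ∏ k ∈ Finset.Ioi j,
      theta p (q ^ (ν k - ν j) * (xiPt (a 0) t n k / xiPt (a 0) t n j)) *
          theta p (q ^ (ν j + ν k) * (xiPt (a 0) t n j * xiPt (a 0) t n k)) /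
        (theta p (xiPt (a 0) t n k / xiPt (a 0) t n j) *
          theta p (xiPt (a 0) t n j * xiPt (a 0) t n k))) *
  (∏ i : Fin n, ∏ m : Fin 6,
      thetaPoch p q (a m * xiPt (a 0) t n i) (ν i) /
        thetaPoch p q (q * (a m)⁻¹ * xiPt (a 0) t n i) (ν i)) *
  (∏ j : Fin n, ∏ k ∈ Finset.Ioi j,
      thetaPoch p q (t * (xiPt (a 0) t n k / xiPt (a 0) t n j)) (ν k - ν j) *
          thetaPoch p q (t * (xiPt (a 0) t n j * xiPt (a 0) t n k)) (ν j + ν k) /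
        (thetaPoch p q (q * t⁻¹ * (xiPt (a 0) t n k / xiPt (a 0) t n j)) (ν k - ν j) *
          thetaPoch p q (q * t⁻¹ * (xiPt (a 0) t n j * xiPt (a 0) t n k)) (ν j + ν k)))

/-- The truncated Jackson integral `⟨φ⟩ = Σ_{0 ≤ ν₁ ≤ … ≤ ν_n ≤ N} W(ν) φ(q^ν ξ)`. -/
noncomputable def jackson (p q t : ℂ) (a : Fin 6 → ℂ) (n N : ℕ)
    (φ : (Fin n → ℂ) → ℂ) : ℂ :=
  ∑ ν ∈ Finset.univ.filter
      (fun ν : Fin n → Fin (N + 1) => ∀ i j : Fin n, i ≤ j → ν i ≤ ν j),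
    weight p q t a n (fun i => (ν i : ℕ)) *
      φ (fun i => q ^ (ν i : ℕ) * xiPt (a 0) t n i)

/-- Genericity: all theta denominators appearing in the weight `W(ν)`,
for `0 ≤ ν₁ ≤ … ≤ ν_n ≤ N`, are nonzero. -/
def weightDenomsNZ (p q t : ℂ) (a : Fin 6 → ℂ) (n N : ℕ) : Prop :=
  (∀ i : Fin n, theta p (xiPt (a 0) t n i ^ 2) ≠ 0) ∧
  (∀ j k : Fin n, j < k →
      theta p (xiPt (a 0) t n k / xiPt (a 0) t n j) ≠ 0 ∧
        theta p (xiPt (a 0) t n j * xiPt (a 0) t n k) ≠ 0) ∧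
  (∀ (m : Fin 6) (i : Fin n) (k : ℕ), k ≤ N →
      thetaPoch p q (q * (a m)⁻¹ * xiPt (a 0) t n i) k ≠ 0) ∧
  (∀ j k : Fin n, j < k → ∀ l : ℕ, l ≤ 2 * N →
      thetaPoch p q (q * t⁻¹ * (xiPt (a 0) t n k / xiPt (a 0) t n j)) l ≠ 0 ∧
        thetaPoch p q (q * t⁻¹ * (xiPt (a 0) t n j * xiPt (a 0) t n k)) l ≠ 0)

/-! ### Auxiliary infrastructure for the proof -/

section Aux

open Filter Topology

/-- The half theta product `ψ(u) = ∏_{i≥0}(1 - p^i u)`. -/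
noncomputable def psiTh (p u : ℂ) : ℂ := ∏' i : ℕ, (1 - p ^ i * u)

lemma one_sub_ne {x : ℂ} (hx : ‖x‖ < 1) : (1 : ℂ) - x ≠ 0 := by
  intro h
  rw [sub_eq_zero] at h
  rw [← h] at hx
  simp at hx

lemma one_sub_mem_slitPlane {x : ℂ} (hx : ‖x‖ < 1) : (1 : ℂ) - x ∈ Complex.slitPlane := by
  have := Complex.mem_slitPlane_of_norm_lt_one (z := -x) (by simpa using hx)
  simpa [sub_eq_add_neg] using this

lemma norm_log_one_sub_le {x : ℂ} (hx : ‖x‖ ≤ 1 / 2) :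
    ‖Complex.log (1 - x)‖ ≤ 3 / 2 * ‖x‖ := by
  have := Complex.norm_log_one_add_half_le_self (z := -x) (by simpa using hx)
  simpa [sub_eq_add_neg] using this

lemma summable_log_psiTh {p v : ℂ} (hp : ‖p‖ < 1) (hv : ‖v‖ ≤ 1 / 2) :
    Summable fun i : ℕ => Complex.log (1 - p ^ i * v) := by
  apply Summable.of_norm_bounded (g := fun i : ℕ => 3 / 2 * (‖p‖ ^ i * ‖v‖))
  · exact ((summable_geometric_of_lt_one (norm_nonneg p) hp).mul_right ‖v‖).mul_left _
  · intro i
    have h1 : ‖p ^ i * v‖ ≤ ‖v‖ := by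
      rw [norm_mul, norm_pow]
      calc ‖p‖ ^ i * ‖v‖ ≤ 1 * ‖v‖ := by
            gcongr
            exact pow_le_one₀ (norm_nonneg p) hp.le
        _ = ‖v‖ := one_mul _
    have h2 := norm_log_one_sub_le (x := p ^ i * v) (le_trans h1 hv)
    rw [norm_mul, norm_pow] at h2
    exact h2

lemma hasProd_zero_of_eq_zero {f : ℕ → ℂ} {i : ℕ} (hi : f i = 0) : HasProd f 0 := by
  have h : (fun s : Finset ℕ => ∏ j ∈ s, f j) =ᶠ[Filter.atTop] fun _ => 0 := by
    filter_upwards [Filter.eventually_ge_atTop ({i} : Finset ℕ)] with s hs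
    exact Finset.prod_eq_zero (hs (Finset.mem_singleton_self i)) hi
  exact Filter.Tendsto.congr' h.symm tendsto_const_nhds

lemma exists_pow_small (p : ℂ) (hp : ‖p‖ < 1) (C : ℝ) : ∃ N : ℕ, ‖p‖ ^ N * C ≤ 1 / 2 := by
  have h2 := (tendsto_pow_atTop_nhds_zero_of_lt_one (norm_nonneg p) hp).mul_const C
  rw [zero_mul] at h2
  exact (h2.eventually_le_const (show (0 : ℝ) < 1 / 2 by norm_num)).exists

lemma multipliable_psiTh {p : ℂ} (hp : ‖p‖ < 1) (u : ℂ) :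
    Multipliable fun i : ℕ => (1 : ℂ) - p ^ i * u := by
  by_cases h0 : ∃ i, (1 : ℂ) - p ^ i * u = 0
  · obtain ⟨i, hi⟩ := h0
    exact ⟨0, hasProd_zero_of_eq_zero hi⟩
  push_neg at h0
  obtain ⟨N, hN⟩ := exists_pow_small p hp ‖u‖
  apply Multipliable.comp_nat_add (k := N)
  have hsm : ‖p ^ N * u‖ ≤ 1 / 2 := by rw [norm_mul, norm_pow]; exact hN
  have hs : Summable fun i : ℕ => Complex.log (1 - p ^ i * (p ^ N * u)) :=
    summable_log_psiTh hp hsm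
  have key := Complex.multipliable_of_summable_log
    (f := fun i => (1 : ℂ) - p ^ i * (p ^ N * u)) hs
  exact key.congr fun i => by rw [pow_add]; ring

lemma theta_eq_psiTh {p : ℂ} (hp : ‖p‖ < 1) (z : ℂ) :
    theta p z = psiTh p z * psiTh p (p * z⁻¹) := by
  have hB : Multipliable fun i : ℕ => (1 : ℂ) - p ^ (i + 1) * z⁻¹ :=
    (multipliable_psiTh hp (p * z⁻¹)).congr fun i => by rw [pow_succ]; ring
  have ht := Multipliable.tprod_mul (f := fun i : ℕ => (1 : ℂ) - p ^ i * z)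
    (g := fun i : ℕ => (1 : ℂ) - p ^ (i + 1) * z⁻¹) (multipliable_psiTh hp z) hB
  rw [theta, ht, psiTh, psiTh]
  congr 1
  exact tprod_congr fun i => by rw [pow_succ]; ring

lemma psiTh_shift {p : ℂ} (hp : ‖p‖ < 1) (u : ℂ) :
    psiTh p u = (1 - u) * psiTh p (p * u) := by
  have h : Multipliable fun n : ℕ => (1 : ℂ) - p ^ (n + 1) * u :=
    (multipliable_psiTh hp (p * u)).congr fun i => by rw [pow_succ]; ring
  have ht := tprod_eq_zero_mul' (f := fun i : ℕ => (1 : ℂ) - p ^ i * u) h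
  rw [psiTh, ht]
  simp only [pow_zero, one_mul]
  congr 1
  exact tprod_congr fun i => by rw [pow_succ]; ring

lemma theta_inv {p : ℂ} (hp : ‖p‖ < 1) {x : ℂ} (hx : x ≠ 0) :
    theta p x = -x * theta p x⁻¹ := by
  rw [theta_eq_psiTh hp, theta_eq_psiTh hp, inv_inv, psiTh_shift hp x, psiTh_shift hp x⁻¹]
  have h2 : x * x⁻¹ = 1 := mul_inv_cancel₀ hx
  have h1 : (1 : ℂ) - x = -x * (1 - x⁻¹) := by linear_combination (-1 : ℂ) * h2
  rw [h1]; ring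

lemma continuousAt_psiTh {p : ℂ} (hp : ‖p‖ < 1) (u₀ : ℂ) : ContinuousAt (psiTh p) u₀ := by
  obtain ⟨N, hN⟩ := exists_pow_small p hp (‖u₀‖ + 1)
  have hC : ∀ u ∈ Metric.ball u₀ 1, ‖u‖ ≤ ‖u₀‖ + 1 := by
    intro u hu
    have h1 : ‖u - u₀‖ < 1 := by rwa [Metric.mem_ball, dist_eq_norm] at hu
    calc ‖u‖ = ‖u - u₀ + u₀‖ := by ring_nf
      _ ≤ ‖u - u₀‖ + ‖u₀‖ := norm_add_le _ _
      _ ≤ ‖u₀‖ + 1 := by linarith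
  have hkey : ∀ u ∈ Metric.ball u₀ 1, ∀ i : ℕ, ‖p ^ (i + N) * u‖ ≤ 1 / 2 * ‖p‖ ^ i := by
    intro u hu i
    rw [norm_mul, norm_pow, pow_add]
    calc ‖p‖ ^ i * ‖p‖ ^ N * ‖u‖ ≤ ‖p‖ ^ i * ‖p‖ ^ N * (‖u₀‖ + 1) := by
          gcongr
          exact hC u hu
      _ = ‖p‖ ^ i * (‖p‖ ^ N * (‖u₀‖ + 1)) := by ring
      _ ≤ ‖p‖ ^ i * (1 / 2) := by
          gcongr
      _ = 1 / 2 * ‖p‖ ^ i := by ring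
  have hkey2 : ∀ u ∈ Metric.ball u₀ 1, ∀ i : ℕ, ‖p ^ (i + N) * u‖ ≤ 1 / 2 := by
    intro u hu i
    refine (hkey u hu i).trans ?_
    calc 1 / 2 * ‖p‖ ^ i ≤ 1 / 2 * 1 := by
          gcongr
          exact pow_le_one₀ (norm_nonneg p) hp.le
      _ = 1 / 2 := mul_one _
  have hne : ∀ u ∈ Metric.ball u₀ 1, ∀ i : ℕ, (1 : ℂ) - p ^ (i + N) * u ≠ 0 :=
    fun u hu i => one_sub_ne (lt_of_le_of_lt (hkey2 u hu i) (by norm_num))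
  have hsum : ∀ u ∈ Metric.ball u₀ 1,
      Summable fun i : ℕ => Complex.log (1 - p ^ (i + N) * u) := by
    intro u hu
    have h0 := hkey2 u hu 0
    rw [zero_add] at h0
    exact (summable_log_psiTh hp (v := p ^ N * u) h0).congr fun i => by
      rw [pow_add, mul_assoc]
  have hrep : ∀ u ∈ Metric.ball u₀ 1, psiTh p u =
      (∏ i ∈ Finset.range N, (1 - p ^ i * u)) *
        Complex.exp (∑' i : ℕ, Complex.log (1 - p ^ (i + N) * u)) := by
    intro u hu
    have hm : Multipliable fun i : ℕ => (1 : ℂ) - p ^ (i + N) * u :=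
      (multipliable_psiTh hp (p ^ N * u)).congr fun i => by rw [pow_add, mul_assoc]
    have ht := Multipliable.prod_mul_tprod_nat_mul' (f := fun i : ℕ => (1 : ℂ) - p ^ i * u) (k := N) hm
    rw [psiTh, ← ht]
    congr 1
    exact (Complex.cexp_tsum_eq_tprod (f := fun i => 1 - p ^ (i + N) * u)
      (hne u hu) (hsum u hu)).symm
  have hcont : ContinuousOn (fun u : ℂ =>
      (∏ i ∈ Finset.range N, (1 - p ^ i * u)) *
        Complex.exp (∑' i : ℕ, Complex.log (1 - p ^ (i + N) * u))) (Metric.ball u₀ 1) := by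
    apply ContinuousOn.mul
    · exact (continuous_finset_prod _ fun i _ =>
        continuous_const.sub (continuous_const.mul continuous_id)).continuousOn
    · refine Complex.continuous_exp.comp_continuousOn ?_
      refine continuousOn_tsum (u := fun i : ℕ => 3 / 2 * (1 / 2 * ‖p‖ ^ i)) ?_ ?_ ?_
      · intro i
        refine ContinuousOn.clog
          ((continuous_const.sub (continuous_const.mul continuous_id)).continuousOn) ?_
        intro x hx
        exact one_sub_mem_slitPlane (lt_of_le_of_lt (hkey2 x hx i) (by norm_num))
      · exact ((summable_geometric_of_lt_one (norm_nonneg p) hp).mul_left _).mul_left _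
      · intro i x hx
        refine (norm_log_one_sub_le (hkey2 x hx i)).trans ?_
        have h := hkey x hx i
        linarith
  exact (hcont.congr hrep).continuousAt (Metric.ball_mem_nhds u₀ one_pos)

lemma continuousAt_theta {p : ℂ} (hp : ‖p‖ < 1) {z₀ : ℂ} (hz : z₀ ≠ 0) :
    ContinuousAt (theta p) z₀ := by
  have h : theta p = fun z => psiTh p z * psiTh p (p * z⁻¹) :=
    funext fun z => theta_eq_psiTh hp z
  rw [h]
  exact (continuousAt_psiTh hp z₀).mul
    ((continuousAt_psiTh hp _).comp (continuousAt_const.mul (continuousAt_inv₀ hz)))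

lemma ca_theta {p : ℂ} (hp : ‖p‖ < 1) {g : ℂ → ℂ} {w : ℂ}
    (hg : ContinuousAt g w) (h0 : g w ≠ 0) :
    ContinuousAt (fun z => theta p (g z)) w :=
  (continuousAt_theta hp h0).comp hg

lemma ca_thetaPm {p : ℂ} (hp : ‖p‖ < 1) {g h : ℂ → ℂ} {w : ℂ}
    (hg : ContinuousAt g w) (hh : ContinuousAt h w)
    (hg0 : g w ≠ 0) (hh0 : h w ≠ 0) :
    ContinuousAt (fun z => thetaPm p (g z) (h z)) w := by
  have he : (fun z => thetaPm p (g z) (h z)) =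
      fun z => theta p (g z * h z) * theta p (g z * (h z)⁻¹) := rfl
  rw [he]
  exact (ca_theta hp (hg.mul hh) (mul_ne_zero hg0 hh0)).mul
    (ca_theta hp (hg.mul (hh.inv₀ hh0)) (mul_ne_zero hg0 (inv_ne_zero hh0)))

/-! #### Finset/Fin bookkeeping -/

lemma prod_erase_zero {M : Type*} [CommMonoid M] {m : ℕ} (f : Fin (m + 1) → M) :
    ∏ j ∈ Finset.univ.erase 0, f j = ∏ j : Fin m, f j.succ := by
  have h : Finset.univ.erase (0 : Fin (m + 1)) = Finset.Ioi 0 := by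
    ext a
    simp [Finset.mem_Ioi, Fin.pos_iff_ne_zero]
  rw [h, Fin.Ioi_zero_eq_map, Finset.prod_map]
  rfl

lemma prod_erase_one {M : Type*} [CommMonoid M] {m : ℕ} (f : Fin (m + 2) → M) :
    ∏ j ∈ Finset.univ.erase 1, f j = f 0 * ∏ j : Fin m, f j.succ.succ := by
  have h0 : (0 : Fin (m + 2)) ∈ Finset.univ.erase 1 := by
    simp [Finset.mem_erase]
  rw [← Finset.mul_prod_erase _ f h0, Finset.erase_right_comm]
  congr 1
  have h2 : Finset.univ.erase (0 : Fin (m + 2)) = Finset.univ.map (Fin.succEmb (m + 1)) := by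
    have h : Finset.univ.erase (0 : Fin (m + 2)) = Finset.Ioi 0 := by
      ext a
      simp [Finset.mem_Ioi, Fin.pos_iff_ne_zero]
    rw [h, Fin.Ioi_zero_eq_map]
  have h3 : (1 : Fin (m + 2)) = (Fin.succEmb (m + 1)) 0 := rfl
  rw [h2, h3, ← Finset.map_erase, Finset.prod_map]
  exact prod_erase_zero fun j => f j.succ

lemma cons_cons_one {α : Type*} {m : ℕ} (x y : α) (ys : Fin m → α) :
    (Fin.cons x (Fin.cons y ys) : Fin (m + 2) → α) 1 = y := by
  rw [← Fin.succ_zero_eq_one, Fin.cons_succ, Fin.cons_zero]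

lemma update_cons_cons_one {α : Type*} {m : ℕ} (x y v : α) (ys : Fin m → α) :
    Function.update (Fin.cons x (Fin.cons y ys) : Fin (m + 2) → α) 1 v
      = Fin.cons x (Fin.cons v ys) := by
  rw [← Fin.succ_zero_eq_one, ← Fin.cons_update, Fin.update_cons_zero]

lemma Fplus_cons_zero (p t : ℂ) (a : Fin 6 → ℂ) {n : ℕ} (z₁ w : ℂ) (zs : Fin n → ℂ) :
    Fplus p t a (0 : Fin (n + 2)) (Fin.cons z₁ (Fin.cons w zs)) =
      ((∏ m : Fin 6, theta p (a m * z₁)) / (z₁ ^ 2 * theta p (z₁ ^ 2))) *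
        ((thetaPm p (t * z₁) w / thetaPm p z₁ w) *
          ∏ j : Fin n, thetaPm p (t * z₁) (zs j) / thetaPm p z₁ (zs j)) := by
  rw [Fplus, prod_erase_zero]
  simp only [Fin.cons_zero, Fin.cons_succ]
  have hps : (∏ j : Fin (n + 1),
        thetaPm p (t * z₁) ((Fin.cons w zs : Fin (n + 1) → ℂ) j) /
          thetaPm p z₁ ((Fin.cons w zs : Fin (n + 1) → ℂ) j))
      = thetaPm p (t * z₁) w / thetaPm p z₁ w *
        ∏ j : Fin n, thetaPm p (t * z₁) (zs j) / thetaPm p z₁ (zs j) := by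
    rw [Fin.prod_univ_succ]
    simp only [Fin.cons_zero, Fin.cons_succ]
  rw [hps]

lemma Fplus_cons_one (p t : ℂ) (a : Fin 6 → ℂ) {n : ℕ} (z₁ w : ℂ) (zs : Fin n → ℂ) :
    Fplus p t a (1 : Fin (n + 2)) (Fin.cons z₁ (Fin.cons w zs)) =
      ((∏ m : Fin 6, theta p (a m * w)) / (w ^ 2 * theta p (w ^ 2))) *
        ((thetaPm p (t * w) z₁ / thetaPm p w z₁) *
          ∏ j : Fin n, thetaPm p (t * w) (zs j) / thetaPm p w (zs j)) := by
  rw [Fplus, prod_erase_one]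
  simp only [Fin.cons_zero, Fin.cons_succ, cons_cons_one]

lemma Fminus_cons_zero (p t : ℂ) (a : Fin 6 → ℂ) {n : ℕ} (z₁ w : ℂ) (zs : Fin n → ℂ) :
    Fminus p t a (0 : Fin (n + 2)) (Fin.cons z₁ (Fin.cons w zs)) =
      Fplus p t a (0 : Fin (n + 2)) (Fin.cons z₁⁻¹ (Fin.cons w zs)) := by
  rw [Fminus, Fin.cons_zero, Fin.update_cons_zero]

lemma Fminus_cons_one (p t : ℂ) (a : Fin 6 → ℂ) {n : ℕ} (z₁ w : ℂ) (zs : Fin n → ℂ) :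
    Fminus p t a (1 : Fin (n + 2)) (Fin.cons z₁ (Fin.cons w zs)) =
      Fplus p t a (1 : Fin (n + 2)) (Fin.cons z₁ (Fin.cons w⁻¹ zs)) := by
  rw [Fminus, cons_cons_one, update_cons_cons_one]

/-! #### The key algebraic identities -/

lemma key_plus {p : ℂ} (hp : ‖p‖ < 1) (t : ℂ) (a : Fin 6 → ℂ) {n : ℕ}
    {z₁ w : ℂ} (hz : z₁ ≠ 0) (hw : w ≠ 0) (zs : Fin n → ℂ) (Ew Ez : ℂ) :
    theta p (z₁ / w) *
        (Fplus p t a (0 : Fin (n + 2)) (Fin.cons z₁ (Fin.cons w zs)) * Ew +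
          Fplus p t a (1 : Fin (n + 2)) (Fin.cons z₁ (Fin.cons w zs)) * Ez) =
      theta p (z₁ * w⁻¹) / (theta p (z₁ * w) * theta p (z₁ * w⁻¹)) *
        (thetaPm p (t * z₁) w *
            ((∏ m : Fin 6, theta p (a m * z₁)) / (z₁ ^ 2 * theta p (z₁ ^ 2)) *
              (∏ j : Fin n, thetaPm p (t * z₁) (zs j) / thetaPm p z₁ (zs j)) * Ew) +
          -(w⁻¹ * z₁) * (thetaPm p (t * w) z₁ *
            ((∏ m : Fin 6, theta p (a m * w)) / (w ^ 2 * theta p (w ^ 2)) *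
              (∏ j : Fin n, thetaPm p (t * w) (zs j) / thetaPm p w (zs j)) * Ez))) := by
  rw [Fplus_cons_zero, Fplus_cons_one]
  have e1 : thetaPm p z₁ w = theta p (z₁ * w) * theta p (z₁ * w⁻¹) := rfl
  have e2 : thetaPm p w z₁ = theta p (z₁ * w) * (-(w * z₁⁻¹) * theta p (z₁ * w⁻¹)) := by
    rw [thetaPm, mul_comm w z₁, theta_inv hp (mul_ne_zero hw (inv_ne_zero hz)),
      mul_inv, inv_inv, mul_comm w⁻¹ z₁]
  rw [e1, e2]
  simp only [div_eq_mul_inv, mul_inv, inv_neg, inv_inv]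
  ring

lemma key_minus {p : ℂ} (hp : ‖p‖ < 1) (t : ℂ) (a : Fin 6 → ℂ) {n : ℕ}
    {z₁ w : ℂ} (hz : z₁ ≠ 0) (hw : w ≠ 0) (zs : Fin n → ℂ) (Ew Ez : ℂ) :
    theta p (z₁ / w) *
        (Fminus p t a (0 : Fin (n + 2)) (Fin.cons z₁ (Fin.cons w zs)) * Ew +
          Fminus p t a (1 : Fin (n + 2)) (Fin.cons z₁ (Fin.cons w zs)) * Ez) =
      theta p (z₁ * w⁻¹) / (theta p (w⁻¹ * z₁⁻¹) * theta p (z₁ * w⁻¹)) *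
        (-(z₁ * w⁻¹) * (thetaPm p (t * z₁⁻¹) w *
            ((∏ m : Fin 6, theta p (a m * z₁⁻¹)) / (z₁⁻¹ ^ 2 * theta p (z₁⁻¹ ^ 2)) *
              (∏ j : Fin n, thetaPm p (t * z₁⁻¹) (zs j) / thetaPm p z₁⁻¹ (zs j)) * Ew)) +
          thetaPm p (t * w⁻¹) z₁ *
            ((∏ m : Fin 6, theta p (a m * w⁻¹)) / (w⁻¹ ^ 2 * theta p (w⁻¹ ^ 2)) *
              (∏ j : Fin n, thetaPm p (t * w⁻¹) (zs j) / thetaPm p w⁻¹ (zs j)) * Ez)) := by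
  rw [Fminus_cons_zero, Fminus_cons_one, Fplus_cons_zero, Fplus_cons_one]
  have e1 : thetaPm p z₁⁻¹ w =
      -(z₁⁻¹ * w) * theta p (z₁ * w⁻¹) * theta p (w⁻¹ * z₁⁻¹) := by
    rw [thetaPm, mul_comm z₁⁻¹ w⁻¹, theta_inv hp (mul_ne_zero (inv_ne_zero hz) hw),
      mul_inv, inv_inv]
  have e2 : thetaPm p w⁻¹ z₁ = theta p (z₁ * w⁻¹) * theta p (w⁻¹ * z₁⁻¹) := by
    rw [thetaPm, mul_comm w⁻¹ z₁]
  rw [e1, e2]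
  simp only [div_eq_mul_inv, mul_inv, inv_neg, inv_inv]
  ring

/-! #### The squeeze argument -/

lemma tendsto_aux {w : ℂ} (hw : w ≠ 0) (G S c D : ℂ → ℂ)
    (hGS : ∀ z₁ : ℂ, z₁ ≠ 0 → G z₁ = D z₁ / (c z₁ * D z₁) * S z₁)
    (hc : ContinuousAt c w) (hc0 : c w ≠ 0) (hS : ContinuousAt S w) (hS0 : S w = 0) :
    Filter.Tendsto G (nhdsWithin w {w}ᶜ) (nhds 0) := by
  refine squeeze_zero_norm'
    (a := fun z₁ => ‖(c z₁)⁻¹‖ * ‖S z₁‖) ?_ ?_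
  · have h0 : ∀ᶠ z₁ in nhdsWithin w {w}ᶜ, z₁ ≠ 0 :=
      Filter.Eventually.filter_mono nhdsWithin_le_nhds (eventually_ne_nhds hw)
    filter_upwards [h0] with z hz
    rw [hGS z hz, norm_mul]
    have hq : ‖D z / (c z * D z)‖ ≤ ‖(c z)⁻¹‖ := by
      rcases eq_or_ne (D z) 0 with h | h
      · simp [h]
      · rw [div_eq_mul_inv, mul_inv, ← mul_assoc, mul_comm (D z) (c z)⁻¹, mul_assoc,
          mul_inv_cancel₀ h, mul_one]
    exact mul_le_mul_of_nonneg_right hq (norm_nonneg _)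
  · have ht : Filter.Tendsto (fun z₁ => ‖(c z₁)⁻¹‖ * ‖S z₁‖) (nhds w)
        (nhds (‖(c w)⁻¹‖ * ‖S w‖)) := ((hc.inv₀ hc0).norm.mul hS.norm)
    rw [hS0, norm_zero, mul_zero] at ht
    exact ht.mono_left nhdsWithin_le_nhds

/-! #### Continuity of the building blocks -/

lemma ca_thetaPm_cons {p : ℂ} (hp : ‖p‖ < 1) {C : ℂ} (hC : C ≠ 0) {n : ℕ}
    (zs : Fin n → ℂ) {w : ℂ} (hw : w ≠ 0) (i : Fin (n + 1)) :
    ContinuousAt (fun z₁ : ℂ => thetaPm p C ((Fin.cons z₁ zs : Fin (n + 1) → ℂ) i)) w := by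
  rcases Fin.eq_zero_or_eq_succ i with rfl | ⟨j, rfl⟩
  · simp only [Fin.cons_zero]
    exact ca_thetaPm hp continuousAt_const continuousAt_id hC hw
  · simp only [Fin.cons_succ]
    exact continuousAt_const

lemma continuousAt_Efun_cons {p : ℂ} (hp : ‖p‖ < 1) {t a₀ a₁ : ℂ} (ht : t ≠ 0)
    (h₀ : a₀ ≠ 0) (h₁ : a₁ ≠ 0) {n : ℕ} (r' : ℕ) (zs : Fin n → ℂ) {w : ℂ} (hw : w ≠ 0) :
    ContinuousAt (fun z₁ : ℂ => Efun p t a₀ a₁ r' (Fin.cons z₁ zs)) w := by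
  unfold Efun
  apply tendsto_finset_sum
  intro S _
  refine ContinuousAt.mul ?_ ?_
  · apply tendsto_finset_prod
    intro i _
    exact (ca_thetaPm_cons hp (mul_ne_zero h₁ (pow_ne_zero _ ht)) zs hw i).div_const _
  · apply tendsto_finset_prod
    intro i _
    exact (ca_thetaPm_cons hp (mul_ne_zero h₀ (pow_ne_zero _ ht)) zs hw i).div_const _

end Aux

/-- the regularity of `h_r` along `z₁ = z₂`: for `ε ∈ {+, -}`
(`ε = true` for `F^+`, `ε = false` for `F^-`), the function
`z₁ ↦ θ(z₁/w;p) (F₁^ε(z₁,w,z₃,…) E_{r-1}^{(n-1)}(w,z₃,…) + F₂^ε(z₁,w,z₃,…) E_{r-1}^{(n-1)}(z₁,z₃,…))`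
tends to `0` as `z₁ → w`.  (Here the number of variables is `n + 2 ≥ 2`.) -/
theorem h_no_pole_along_diagonal (n r : ℕ) (hr1 : 1 ≤ r) (hr2 : r ≤ n + 2) (ε : Bool)
    (p t : ℂ) (a : Fin 6 → ℂ) (hp : ‖p‖ < 1) (hp0 : p ≠ 0) (ht : t ≠ 0)
    (ha : ∀ m, a m ≠ 0) (w : ℂ) (hw : w ≠ 0) (zs : Fin n → ℂ) (hzs : ∀ j, zs j ≠ 0)
    (hgenE : eDenomsNZ p t (a 0) (a 1) (n + 1))
    (hw2 : theta p (w ^ 2) ≠ 0) (hw2' : theta p ((w⁻¹) ^ 2) ≠ 0)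
    (hwz : ∀ j : Fin n, thetaPm p w (zs j) ≠ 0 ∧ thetaPm p w⁻¹ (zs j) ≠ 0)
    (hzz : ∀ j k : Fin n, j ≠ k → thetaPm p (zs j) (zs k) ≠ 0)
    (hz2 : ∀ j : Fin n, theta p (zs j ^ 2) ≠ 0) :
    Filter.Tendsto
      (fun z₁ : ℂ =>
        theta p (z₁ / w) *
          ((if ε then Fplus p t a (0 : Fin (n + 2)) (Fin.cons z₁ (Fin.cons w zs))
              else Fminus p t a (0 : Fin (n + 2)) (Fin.cons z₁ (Fin.cons w zs))) *
              Efun p t (a 0) (a 1) (r - 1) (Fin.cons w zs) +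
            (if ε then Fplus p t a (1 : Fin (n + 2)) (Fin.cons z₁ (Fin.cons w zs))
              else Fminus p t a (1 : Fin (n + 2)) (Fin.cons z₁ (Fin.cons w zs))) *
              Efun p t (a 0) (a 1) (r - 1) (Fin.cons z₁ zs)))
      (nhdsWithin w {w}ᶜ) (nhds 0) := by
  cases ε with
  | true =>
    simp only [↓reduceIte]
    refine tendsto_aux hw _
      (fun z₁ : ℂ =>
        thetaPm p (t * z₁) w *
            ((∏ m : Fin 6, theta p (a m * z₁)) / (z₁ ^ 2 * theta p (z₁ ^ 2)) *
              (∏ j : Fin n, thetaPm p (t * z₁) (zs j) / thetaPm p z₁ (zs j)) *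
              Efun p t (a 0) (a 1) (r - 1) (Fin.cons w zs)) +
          -(w⁻¹ * z₁) * (thetaPm p (t * w) z₁ *
            ((∏ m : Fin 6, theta p (a m * w)) / (w ^ 2 * theta p (w ^ 2)) *
              (∏ j : Fin n, thetaPm p (t * w) (zs j) / thetaPm p w (zs j)) *
              Efun p t (a 0) (a 1) (r - 1) (Fin.cons z₁ zs))))
      (fun z₁ : ℂ => theta p (z₁ * w)) (fun z₁ : ℂ => theta p (z₁ * w⁻¹))
      ?_ ?_ ?_ ?_ ?_
    · intro z₁ hz₁
      exact key_plus hp t a hz₁ hw zs _ _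
    · exact ca_theta hp (continuousAt_id.mul continuousAt_const) (mul_ne_zero hw hw)
    · show theta p (w * w) ≠ 0
      rw [show w * w = w ^ 2 from (sq w).symm]
      exact hw2
    · apply ContinuousAt.add
      · apply ContinuousAt.mul
        · exact ca_thetaPm hp (continuousAt_const.mul continuousAt_id) continuousAt_const
            (mul_ne_zero ht hw) hw
        · apply ContinuousAt.mul
          · apply ContinuousAt.mul
            · apply ContinuousAt.div
              · apply tendsto_finset_prod
                intro m _
                exact ca_theta hp (continuousAt_const.mul continuousAt_id)
                  (mul_ne_zero (ha m) hw)
              · exact (continuousAt_id.pow 2).mul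
                  (ca_theta hp (continuousAt_id.pow 2) (pow_ne_zero 2 hw))
              · exact mul_ne_zero (pow_ne_zero 2 hw) hw2
            · apply tendsto_finset_prod
              intro j _
              apply ContinuousAt.div
              · exact ca_thetaPm hp (continuousAt_const.mul continuousAt_id) continuousAt_const
                  (mul_ne_zero ht hw) (hzs j)
              · exact ca_thetaPm hp continuousAt_id continuousAt_const hw (hzs j)
              · exact (hwz j).1
          · exact continuousAt_const
      · apply ContinuousAt.mul
        · exact (continuousAt_const.mul continuousAt_id).neg
        · apply ContinuousAt.mul
          · exact ca_thetaPm hp continuousAt_const continuousAt_id (mul_ne_zero ht hw) hw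
          · exact continuousAt_const.mul
              (continuousAt_Efun_cons hp ht (ha 0) (ha 1) (r - 1) zs hw)
    · simp only [inv_mul_cancel₀ hw]
      ring
  | false =>
    simp only [Bool.false_eq_true, if_false]
    refine tendsto_aux hw _
      (fun z₁ : ℂ =>
        -(z₁ * w⁻¹) * (thetaPm p (t * z₁⁻¹) w *
            ((∏ m : Fin 6, theta p (a m * z₁⁻¹)) / (z₁⁻¹ ^ 2 * theta p (z₁⁻¹ ^ 2)) *
              (∏ j : Fin n, thetaPm p (t * z₁⁻¹) (zs j) / thetaPm p z₁⁻¹ (zs j)) *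
              Efun p t (a 0) (a 1) (r - 1) (Fin.cons w zs))) +
          thetaPm p (t * w⁻¹) z₁ *
            ((∏ m : Fin 6, theta p (a m * w⁻¹)) / (w⁻¹ ^ 2 * theta p (w⁻¹ ^ 2)) *
              (∏ j : Fin n, thetaPm p (t * w⁻¹) (zs j) / thetaPm p w⁻¹ (zs j)) *
              Efun p t (a 0) (a 1) (r - 1) (Fin.cons z₁ zs)))
      (fun z₁ : ℂ => theta p (w⁻¹ * z₁⁻¹)) (fun z₁ : ℂ => theta p (z₁ * w⁻¹))
      ?_ ?_ ?_ ?_ ?_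
    · intro z₁ hz₁
      exact key_minus hp t a hz₁ hw zs _ _
    · exact ca_theta hp (continuousAt_const.mul (continuousAt_id.inv₀ hw))
        (mul_ne_zero (inv_ne_zero hw) (inv_ne_zero hw))
    · show theta p (w⁻¹ * w⁻¹) ≠ 0
      rw [show w⁻¹ * w⁻¹ = w⁻¹ ^ 2 from (sq w⁻¹).symm]
      exact hw2'
    · apply ContinuousAt.add
      · apply ContinuousAt.mul
        · exact (continuousAt_id.mul continuousAt_const).neg
        · apply ContinuousAt.mul
          · exact ca_thetaPm hp (continuousAt_const.mul (continuousAt_id.inv₀ hw))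
              continuousAt_const (mul_ne_zero ht (inv_ne_zero hw)) hw
          · apply ContinuousAt.mul
            · apply ContinuousAt.mul
              · apply ContinuousAt.div
                · apply tendsto_finset_prod
                  intro m _
                  exact ca_theta hp (continuousAt_const.mul (continuousAt_id.inv₀ hw))
                    (mul_ne_zero (ha m) (inv_ne_zero hw))
                · exact ((continuousAt_id.inv₀ hw).pow 2).mul
                    (ca_theta hp ((continuousAt_id.inv₀ hw).pow 2)
                      (pow_ne_zero 2 (inv_ne_zero hw)))
                · exact mul_ne_zero (pow_ne_zero 2 (inv_ne_zero hw)) hw2'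
              · apply tendsto_finset_prod
                intro j _
                apply ContinuousAt.div
                · exact ca_thetaPm hp (continuousAt_const.mul (continuousAt_id.inv₀ hw))
                    continuousAt_const (mul_ne_zero ht (inv_ne_zero hw)) (hzs j)
                · exact ca_thetaPm hp (continuousAt_id.inv₀ hw) continuousAt_const
                    (inv_ne_zero hw) (hzs j)
                · exact (hwz j).2
            · exact continuousAt_const
      · apply ContinuousAt.mul
        · exact ca_thetaPm hp continuousAt_const continuousAt_id
            (mul_ne_zero ht (inv_ne_zero hw)) hw
        · exact continuousAt_const.mul
            (continuousAt_Efun_cons hp ht (ha 0) (ha 1) (r - 1) zs hw)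
    · simp only [mul_inv_cancel₀ hw]
      ring
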